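/- Let B₁,…,B_m ≻ 0 and d(x), θ(x) as above. Then x is Pareto critical if and only if d(x) = 0, which holds if and only if θ(x) = 0. -/

import Mathlib

open scoped Matrix

theorem stmt_6 (n m : ℕ) (hm : 0 < m)
    (B : Fin m → Matrix (Fin n) (Fin n) ℝ) (hB : ∀ j, (B j).PosDef)
    (g : Fin m → (Fin n → ℝ)) (dstar : Fin n → ℝ) (θ : ℝ)
    (f : (Fin n → ℝ) → ℝ)
    (hf : f = fun d => Finset.univ.sup' (Finset.univ_nonempty_iff.mpr ⟨⟨0, hm⟩⟩)
      (fun j => g j ⬝ᵥ d + (1 / 2) * (d ⬝ᵥ (B j).mulVec d)))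
    (hmin : ∀ d, f dstar ≤ f d) (hθ : θ = f dstar) :
    ((¬∃ d : Fin n → ℝ, ∀ j, g j ⬝ᵥ d < 0) ↔ dstar = 0) ∧
    (dstar = 0 ↔ θ = 0) := by
  subst hθ
  have hne : (Finset.univ : Finset (Fin m)).Nonempty :=
    Finset.univ_nonempty_iff.mpr ⟨⟨0, hm⟩⟩
  have hpos : ∀ (j) (d : Fin n → ℝ), d ≠ 0 → 0 < d ⬝ᵥ (B j).mulVec d := by
    intro j d hd
    have := (hB j).dotProduct_mulVec_pos hd
    simpa using this
  have hf0 : f 0 = 0 := by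
    rw [hf]; simp
  have hle0 : f dstar ≤ 0 := by
    calc f dstar ≤ f 0 := hmin 0
    _ = 0 := hf0
  have hterm : ∀ j, g j ⬝ᵥ dstar + (1/2) * (dstar ⬝ᵥ (B j).mulVec dstar) ≤ 0 := by
    intro j
    refine le_trans ?_ hle0
    rw [hf]
    exact Finset.le_sup' (fun j => g j ⬝ᵥ dstar + (1/2) * (dstar ⬝ᵥ (B j).mulVec dstar)) (Finset.mem_univ j)
  have claimA : dstar ≠ 0 → ∀ j, g j ⬝ᵥ dstar < 0 := by
    intro hd j
    have h1 := hterm j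
    have h2 := hpos j dstar hd
    linarith
  have claimB : (∃ d : Fin n → ℝ, ∀ j, g j ⬝ᵥ d < 0) → f dstar < 0 := by
    rintro ⟨d, hd⟩
    have hdne : d ≠ 0 := by
      intro h
      have := hd ⟨0, hm⟩
      rw [h] at this
      simp at this
    set t := Finset.univ.inf' hne (fun j => (-(g j ⬝ᵥ d)) / (d ⬝ᵥ (B j).mulVec d)) with ht
    have htpos : 0 < t := by
      rw [ht, Finset.lt_inf'_iff]
      intro j _
      exact div_pos (by linarith [hd j]) (hpos j d hdne)
    have key : f (t • d) < 0 := by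
      rw [hf]
      rw [Finset.sup'_lt_iff]
      intro j _
      have hp := hpos j d hdne
      have hle : t ≤ (-(g j ⬝ᵥ d)) / (d ⬝ᵥ (B j).mulVec d) :=
        Finset.inf'_le _ (Finset.mem_univ j)
      have hle' : t * (d ⬝ᵥ (B j).mulVec d) ≤ -(g j ⬝ᵥ d) := by
        rw [le_div_iff₀ hp] at hle
        linarith
      have hrw : g j ⬝ᵥ (t • d) + (1/2) * ((t • d) ⬝ᵥ (B j).mulVec (t • d))
          = t * (g j ⬝ᵥ d) + (1/2) * (t * (t * (d ⬝ᵥ (B j).mulVec d))) := by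
        simp only [Matrix.mulVec_smul, dotProduct_smul, smul_dotProduct,
          smul_eq_mul]
      rw [hrw]
      nlinarith [hd j, mul_le_mul_of_nonneg_left hle' htpos.le, mul_pos htpos hp]
    exact lt_of_le_of_lt (hmin (t • d)) key
  constructor
  · constructor
    · intro hnex
      by_contra hd
      exact hnex ⟨dstar, claimA hd⟩
    · intro hd hex
      have := claimB hex
      rw [hd, hf0] at this
      exact lt_irrefl _ this
  · constructor
    · intro hd; rw [hd, hf0]
    · intro hθ0
      by_contra hd
      have := claimB ⟨dstar, claimA hd⟩
      rw [hθ0] at this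
      exact lt_irrefl _ this
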